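/- arXiv:0801.1057 — 6 statements merged into one kernel-verified Lean document; each statement's English description precedes it below -/
import Mathlib

section
/- Let d ≥ 1 and let M_d be the C*-algebra of d×d complex matrices. Let t ↦ N_t and t ↦ B_t be continuous families of completely positive linear maps on M_d, and let t ↦ A_t be a continuous family of linear maps on M_d satisfying, for all t ≥ 0, the integral equation A_t = N_t + ∫₀ᵗ ∫₀^{t−u} N_{t−u−s} B_u A_s ds du. Then A_t is completely positive for every t ≥ 0. -/
set_option maxHeartbeats 1000000


open scoped ComplexOrder

noncomputable instance (d : ℕ) : NormedAddCommGroup (Matrix (Fin d) (Fin d) ℂ) :=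
  { Matrix.frobeniusNormedAddCommGroup with
    toPseudoMetricSpace :=
      (Matrix.frobeniusNormedAddCommGroup (m := Fin d) (n := Fin d) (α := ℂ)).toPseudoMetricSpace.replaceUniformity rfl }

noncomputable instance (d : ℕ) : NormedSpace ℂ (Matrix (Fin d) (Fin d) ℂ) :=
  Matrix.frobeniusNormedSpace

/-- A linear map `Φ` on the algebra `M_d` of `d × d` complex matrices is completely positive
if for every `n ≥ 1` the map `Φ ⊗ id` on `M_d ⊗ M_n` (realized on matrices indexed by
`Fin d × Fin n`) maps positive semidefinite matrices to positive semidefinite matrices. -/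
def IsCompletelyPositive {d : ℕ}
    (Φ : Matrix (Fin d) (Fin d) ℂ →L[ℂ] Matrix (Fin d) (Fin d) ℂ) : Prop :=
  ∀ n : ℕ, 0 < n → ∀ M : Matrix (Fin d × Fin n) (Fin d × Fin n) ℂ, M.PosSemidef →
    Matrix.PosSemidef (Matrix.of fun p q : Fin d × Fin n =>
      Φ (Matrix.of fun i j => M (i, p.2) (j, q.2)) p.1 q.1)

namespace CPAux

variable {d : ℕ}

abbrev Md (d : ℕ) := Matrix (Fin d) (Fin d) ℂ
abbrev L (d : ℕ) := Md d →L[ℂ] Md d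

/-- The big matrix `(Φ ⊗ id) M`. -/
noncomputable def bigM (n : ℕ) (Φ : L d) (M : Matrix (Fin d × Fin n) (Fin d × Fin n) ℂ) :
    Matrix (Fin d × Fin n) (Fin d × Fin n) ℂ :=
  Matrix.of fun p q : Fin d × Fin n =>
    Φ (Matrix.of fun i j => M (i, p.2) (j, q.2)) p.1 q.1

lemma isCP_iff (Φ : L d) : IsCompletelyPositive Φ ↔
    ∀ n : ℕ, 0 < n → ∀ M : Matrix (Fin d × Fin n) (Fin d × Fin n) ℂ, M.PosSemidef →
      (bigM n Φ M).PosSemidef := Iff.rfl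

lemma bigM_add (n : ℕ) (Φ Ψ : L d) (M : Matrix (Fin d × Fin n) (Fin d × Fin n) ℂ) :
    bigM n (Φ + Ψ) M = bigM n Φ M + bigM n Ψ M := by
  ext p q
  simp [bigM, Matrix.add_apply]

lemma bigM_smul (n : ℕ) (c : ℝ) (Φ : L d) (M : Matrix (Fin d × Fin n) (Fin d × Fin n) ℂ) :
    bigM n (c • Φ) M = (c : ℂ) • bigM n Φ M := by
  ext p q
  simp [bigM, Matrix.smul_apply, Complex.real_smul]

lemma bigM_comp (n : ℕ) (Φ Ψ : L d) (M : Matrix (Fin d × Fin n) (Fin d × Fin n) ℂ) :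
    bigM n (Φ.comp Ψ) M = bigM n Φ (bigM n Ψ M) := by
  ext p q
  simp only [bigM, Matrix.of_apply, ContinuousLinearMap.comp_apply]
  rfl

/-- The set of completely positive maps. -/
def S (d : ℕ) : Set (L d) := {Φ | IsCompletelyPositive Φ}

lemma zero_mem : (0 : L d) ∈ S d := by
  intro n hn M hM
  have : (Matrix.of fun p q : Fin d × Fin n =>
      (0 : L d) (Matrix.of fun i j => M (i, p.2) (j, q.2)) p.1 q.1) = 0 := by
    ext p q; simp
  rw [this]
  exact Matrix.PosSemidef.zero

lemma add_mem {Φ Ψ : L d} (hΦ : Φ ∈ S d) (hΨ : Ψ ∈ S d) : Φ + Ψ ∈ S d := by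
  intro n hn M hM
  have := (hΦ n hn M hM).add (hΨ n hn M hM)
  rwa [show (Matrix.of fun p q : Fin d × Fin n =>
      (Φ + Ψ) (Matrix.of fun i j => M (i, p.2) (j, q.2)) p.1 q.1) =
      bigM n Φ M + bigM n Ψ M from bigM_add n Φ Ψ M]

lemma psd_smul {m : Type*} [Fintype m] {M : Matrix m m ℂ} (hM : M.PosSemidef) {c : ℝ}
    (hc : 0 ≤ c) : ((c : ℂ) • M).PosSemidef := by
  refine Matrix.PosSemidef.of_dotProduct_mulVec_nonneg ?_ ?_
  · unfold Matrix.IsHermitian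
    rw [Matrix.conjTranspose_smul, hM.1.eq, Complex.star_def, Complex.conj_ofReal]
  · intro x
    rw [Matrix.smul_mulVec, dotProduct_smul, smul_eq_mul]
    exact mul_nonneg (by exact_mod_cast hc) (hM.dotProduct_mulVec_nonneg x)

lemma smul_mem {Φ : L d} (hΦ : Φ ∈ S d) {c : ℝ} (hc : 0 ≤ c) : c • Φ ∈ S d := by
  intro n hn M hM
  have := psd_smul (hΦ n hn M hM) hc
  rwa [show (Matrix.of fun p q : Fin d × Fin n =>
      (c • Φ) (Matrix.of fun i j => M (i, p.2) (j, q.2)) p.1 q.1) =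
      (c : ℂ) • bigM n Φ M from bigM_smul n c Φ M]

lemma comp_mem {Φ Ψ : L d} (hΦ : Φ ∈ S d) (hΨ : Ψ ∈ S d) : Φ.comp Ψ ∈ S d := by
  intro n hn M hM
  have := hΦ n hn (bigM n Ψ M) (hΨ n hn M hM)
  rwa [show (Matrix.of fun p q : Fin d × Fin n =>
      (Φ.comp Ψ) (Matrix.of fun i j => M (i, p.2) (j, q.2)) p.1 q.1) =
      bigM n Φ (bigM n Ψ M) from bigM_comp n Φ Ψ M]

lemma convex_S : Convex ℝ (S d) := by
  intro x hx y hy a b ha hb hab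
  exact add_mem (smul_mem hx ha) (smul_mem hy hb)

end CPAux

namespace CPAux
variable {d : ℕ}

lemma bigM_smulC (n : ℕ) (c : ℂ) (Φ : L d) (M : Matrix (Fin d × Fin n) (Fin d × Fin n) ℂ) :
    bigM n (c • Φ) M = c • bigM n Φ M := by
  ext p q
  simp [bigM, Matrix.smul_apply]

/-- entry evaluation as a linear map in `Φ`. -/
noncomputable def entryL (X : Md d) (i j : Fin d) : L d →ₗ[ℂ] ℂ where
  toFun Φ := Φ X i j
  map_add' Φ Ψ := by simp [Matrix.add_apply]
  map_smul' c Φ := by simp [Matrix.smul_apply]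

lemma continuous_entry (X : Md d) (i j : Fin d) : Continuous fun Φ : L d => Φ X i j :=
  (entryL X i j).continuous_of_finiteDimensional

/-- quadratic form of `bigM` as a linear map in `Φ`. -/
noncomputable def quadL (n : ℕ) (M : Matrix (Fin d × Fin n) (Fin d × Fin n) ℂ) (x : Fin d × Fin n → ℂ) :
    L d →ₗ[ℂ] ℂ where
  toFun Φ := dotProduct (star x) (Matrix.mulVec (bigM n Φ M) x)
  map_add' Φ Ψ := by simp [bigM_add, Matrix.add_mulVec, dotProduct_add]
  map_smul' c Φ := by simp [bigM_smulC, Matrix.smul_mulVec, dotProduct_smul]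

lemma isClosed_nonneg : IsClosed {z : ℂ | 0 ≤ z} := by
  have : {z : ℂ | 0 ≤ z} = Complex.re ⁻¹' Set.Ici 0 ∩ Complex.im ⁻¹' {0} := by
    ext z
    simp [Complex.le_def, eq_comm]
  rw [this]
  exact (IsClosed.preimage Complex.continuous_re isClosed_Ici).inter
    (IsClosed.preimage Complex.continuous_im isClosed_singleton)

lemma isClosed_S : IsClosed (S d) := by
  have hS : S d = ⋂ (n : ℕ) (_ : 0 < n) (M : Matrix (Fin d × Fin n) (Fin d × Fin n) ℂ)
      (_ : M.PosSemidef),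
      ({Φ : L d | ∀ p q, star (bigM n Φ M q p) = bigM n Φ M p q} ∩
       {Φ : L d | ∀ x, 0 ≤ dotProduct (star x) (Matrix.mulVec (bigM n Φ M) x)}) := by
    ext Φ
    simp only [Set.mem_iInter, Set.mem_inter_iff, Set.mem_setOf_eq]
    constructor
    · intro h n hn M hM
      exact ⟨(h n hn M hM).1.apply, (h n hn M hM).dotProduct_mulVec_nonneg⟩
    · intro h n hn M hM
      exact Matrix.PosSemidef.of_dotProduct_mulVec_nonneg (Matrix.IsHermitian.ext fun p q => (h n hn M hM).1 p q) (h n hn M hM).2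
  rw [hS]
  simp only [Set.setOf_forall]
  refine isClosed_iInter fun n => isClosed_iInter fun _ => isClosed_iInter fun M =>
    isClosed_iInter fun _ => IsClosed.inter ?_ ?_
  · refine isClosed_iInter fun p => isClosed_iInter fun q => ?_
    have h1 : Continuous fun Φ : L d => bigM n Φ M q p :=
      continuous_entry (Matrix.of fun i j => M (i, q.2) (j, p.2)) q.1 p.1
    have h2 : Continuous fun Φ : L d => bigM n Φ M p q :=
      continuous_entry (Matrix.of fun i j => M (i, p.2) (j, q.2)) p.1 q.1
    exact isClosed_eq h1.star h2
  · refine isClosed_iInter fun x => ?_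
    have heq : {Φ : L d | 0 ≤ dotProduct (star x) (Matrix.mulVec (bigM n Φ M) x)} =
        (quadL n M x) ⁻¹' {z | 0 ≤ z} := rfl
    rw [heq]
    exact IsClosed.preimage (quadL n M x).continuous_of_finiteDimensional isClosed_nonneg

end CPAux

namespace CPAux
variable {d : ℕ}

open Metric MeasureTheory

noncomputable instance : ProperSpace (L d) := by
  have := FiniteDimensional.complexToReal (L d)
  exact FiniteDimensional.proper ℝ _

lemma S_nonempty : (S d).Nonempty := ⟨0, zero_mem⟩

lemma exists_near (y : L d) : ∃ c ∈ S d, dist y c = infDist y (S d) := by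
  obtain ⟨c, hc, h⟩ := isClosed_S.exists_infDist_eq_dist S_nonempty y
  exact ⟨c, hc, h.symm⟩

lemma infDist_add_le {c : L d} (hc : c ∈ S d) (y : L d) :
    infDist (c + y) (S d) ≤ infDist y (S d) := by
  obtain ⟨z, hz, hdz⟩ := exists_near y
  calc infDist (c + y) (S d) ≤ dist (c + y) (c + z) := infDist_le_dist_of_mem (add_mem hc hz)
  _ = dist y z := dist_add_left c y z
  _ = infDist y (S d) := hdz

lemma infDist_smul_le {t : ℝ} (ht : 0 ≤ t) (y : L d) :
    infDist (t • y) (S d) ≤ t * infDist y (S d) := by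
  obtain ⟨z, hz, hdz⟩ := exists_near y
  calc infDist (t • y) (S d) ≤ dist (t • y) (t • z) := infDist_le_dist_of_mem (smul_mem hz ht)
  _ = ‖t‖ * dist y z := dist_smul₀ t y z
  _ = t * infDist y (S d) := by rw [hdz, Real.norm_of_nonneg ht]

lemma infDist_comp_le {N B : L d} (hN : N ∈ S d) (hB : B ∈ S d) (y : L d) :
    infDist (N.comp (B.comp y)) (S d) ≤ ‖N‖ * ‖B‖ * infDist y (S d) := by
  obtain ⟨z, hz, hdz⟩ := exists_near y
  have hmem : N.comp (B.comp z) ∈ S d := comp_mem hN (comp_mem hB hz)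
  calc infDist (N.comp (B.comp y)) (S d) ≤ dist (N.comp (B.comp y)) (N.comp (B.comp z)) :=
        infDist_le_dist_of_mem hmem
  _ = ‖N.comp (B.comp (y - z))‖ := by
        rw [dist_eq_norm]
        congr 1
        simp [ContinuousLinearMap.comp_sub]
  _ ≤ ‖N‖ * ‖B‖ * dist y z := by
        rw [dist_eq_norm]
        calc ‖N.comp (B.comp (y - z))‖ ≤ ‖N‖ * ‖B.comp (y - z)‖ :=
              ContinuousLinearMap.opNorm_comp_le _ _
        _ ≤ ‖N‖ * (‖B‖ * ‖y - z‖) :=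
              mul_le_mul_of_nonneg_left (ContinuousLinearMap.opNorm_comp_le _ _) (norm_nonneg N)
        _ = ‖N‖ * ‖B‖ * ‖y - z‖ := by ring
  _ = ‖N‖ * ‖B‖ * infDist y (S d) := by rw [hdz]

lemma convex_W : Convex ℝ {p : L d × ℝ | infDist p.1 (S d) ≤ p.2} := by
  rintro ⟨x, r⟩ hx ⟨y, s⟩ hy a b ha hb hab
  simp only [Set.mem_setOf_eq] at *
  obtain ⟨z, hz, hdz⟩ := exists_near x
  obtain ⟨w, hw, hdw⟩ := exists_near y
  have hmem : a • z + b • w ∈ S d := add_mem (smul_mem hz ha) (smul_mem hw hb)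
  calc infDist (a • x + b • y) (S d) ≤ dist (a • x + b • y) (a • z + b • w) :=
        infDist_le_dist_of_mem hmem
  _ ≤ dist (a • x) (a • z) + dist (b • y) (b • w) := dist_add_add_le _ _ _ _
  _ = ‖a‖ * dist x z + ‖b‖ * dist y w := by
        exact congrArg₂ (· + ·) (dist_smul₀ a x z) (dist_smul₀ b y w)
  _ = a * dist x z + b * dist y w := by
        rw [Real.norm_of_nonneg ha, Real.norm_of_nonneg hb]
  _ ≤ a * r + b * s := by
        gcongr
        · rwa [hdz]
        · rwa [hdw]

lemma infDist_integral_le {a b : ℝ} (hab : a ≤ b) (f : ℝ → L d) (hf : Continuous f) :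
    infDist (∫ u in a..b, f u) (S d) ≤ ∫ u in a..b, infDist (f u) (S d) := by
  rcases eq_or_lt_of_le hab with rfl | hlt
  · simp [infDist_zero_of_mem zero_mem]
  have hba : (0 : ℝ) < b - a := by linarith
  set ν : Measure ℝ := volume.restrict (Set.Ioc a b) with hν
  set μ : Measure ℝ := (ENNReal.ofReal (b - a))⁻¹ • ν with hμ
  have hne : ENNReal.ofReal (b - a) ≠ 0 := by
    simp [ENNReal.ofReal_eq_zero]; linarith
  haveI : IsProbabilityMeasure μ := by
    constructor
    rw [hμ, Measure.smul_apply, hν, Measure.restrict_apply MeasurableSet.univ,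
      Set.univ_inter, Real.volume_Ioc, smul_eq_mul]
    exact ENNReal.inv_mul_cancel hne ENNReal.ofReal_ne_top
  set g : ℝ → ℝ := fun u => infDist (f u) (S d) with hg
  have hgc : Continuous g := (continuous_infDist_pt (S d)).comp hf
  have hfint : Integrable f μ := (hf.integrableOn_Ioc).smul_measure
    (by simp [ENNReal.inv_ne_top, hne])
  have hgint : Integrable g μ := (hgc.integrableOn_Ioc).smul_measure
    (by simp [ENNReal.inv_ne_top, hne])
  have hmem : (∫ u, (f u, g u) ∂μ) ∈ {p : L d × ℝ | infDist p.1 (S d) ≤ p.2} := by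
    refine Convex.integral_mem convex_W
      (isClosed_le ((continuous_infDist_pt (S d)).comp continuous_fst) continuous_snd)
      (Filter.Eventually.of_forall fun u => ?_) (hfint.prodMk hgint)
    simp only [Set.mem_setOf_eq]
    exact le_rfl
  rw [integral_pair hfint hgint] at hmem
  simp only [Set.mem_setOf_eq] at hmem
  have h1 : (∫ u, f u ∂μ) = (b - a)⁻¹ • ∫ u, f u ∂ν := by
    rw [hμ, integral_smul_measure, ENNReal.toReal_inv, ENNReal.toReal_ofReal hba.le]
  have h2 : (∫ u, g u ∂μ) = (b - a)⁻¹ * ∫ u, g u ∂ν := by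
    rw [hμ, integral_smul_measure, smul_eq_mul, ENNReal.toReal_inv, ENNReal.toReal_ofReal hba.le]
  have h3 : (∫ u in a..b, f u) = (b - a) • ∫ u, f u ∂μ := by
    rw [h1, smul_smul, mul_inv_cancel₀ hba.ne', one_smul, intervalIntegral.integral_of_le hab]
  have h4 : (∫ u in a..b, g u) = (b - a) * ∫ u, g u ∂μ := by
    rw [h2, intervalIntegral.integral_of_le hab]
    field_simp
    rfl
  rw [h3, h4]
  calc infDist ((b - a) • ∫ u, f u ∂μ) (S d) ≤ (b - a) * infDist (∫ u, f u ∂μ) (S d) :=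
        infDist_smul_le hba.le _
  _ ≤ (b - a) * ∫ u, g u ∂μ := mul_le_mul_of_nonneg_left hmem hba.le

end CPAux

open Metric MeasureTheory CPAux

/-- A continuous family `A_t` satisfying the integral equation
`A_t = N_t + ∫₀ᵗ ∫₀^{t−u} N_{t−u−s} B_u A_s ds du` with `N_t`, `B_t` completely positive
is completely positive for every `t ≥ 0`. -/
theorem integral_equation_completely_positive
    {d : ℕ} (hd : 1 ≤ d)
    (N B : ℝ → (Matrix (Fin d) (Fin d) ℂ →L[ℂ] Matrix (Fin d) (Fin d) ℂ))
    (hNcont : ContinuousOn N (Set.Ici 0))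
    (hNcp : ∀ t, 0 ≤ t → IsCompletelyPositive (N t))
    (hBcont : ContinuousOn B (Set.Ici 0))
    (hBcp : ∀ t, 0 ≤ t → IsCompletelyPositive (B t))
    (A : ℝ → (Matrix (Fin d) (Fin d) ℂ →L[ℂ] Matrix (Fin d) (Fin d) ℂ))
    (hAcont : ContinuousOn A (Set.Ici 0))
    (hAeq : ∀ t, 0 ≤ t → A t = N t +
      ∫ u in (0 : ℝ)..t, ∫ s in (0 : ℝ)..(t - u), (N (t - u - s)).comp ((B u).comp (A s))) :
    ∀ t, 0 ≤ t → IsCompletelyPositive (A t) := by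
  classical
  set π : ℝ → ℝ := fun r => max r 0 with hπdef
  have hπc : Continuous π := continuous_id.max continuous_const
  have hπmem : ∀ r, π r ∈ Set.Ici (0 : ℝ) := fun r => le_max_right r 0
  have hπeq : ∀ r, 0 ≤ r → π r = r := fun r hr => max_eq_left hr
  set N' : ℝ → L d := N ∘ π with hN'def
  set B' : ℝ → L d := B ∘ π with hB'def
  set A' : ℝ → L d := A ∘ π with hA'def
  have hN'c : Continuous N' := hNcont.comp_continuous hπc hπmem
  have hB'c : Continuous B' := hBcont.comp_continuous hπc hπmem
  have hA'c : Continuous A' := hAcont.comp_continuous hπc hπmem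
  have hN'eq : ∀ r, 0 ≤ r → N' r = N r := fun r hr => by simp [hN'def, Function.comp, hπeq r hr]
  have hB'eq : ∀ r, 0 ≤ r → B' r = B r := fun r hr => by simp [hB'def, Function.comp, hπeq r hr]
  have hA'eq : ∀ r, 0 ≤ r → A' r = A r := fun r hr => by simp [hA'def, Function.comp, hπeq r hr]
  have hN'cp : ∀ r, N' r ∈ S d := fun r => hNcp (π r) (hπmem r)
  have hB'cp : ∀ r, B' r ∈ S d := fun r => hBcp (π r) (hπmem r)
  -- the integral equation in terms of the primed (everywhere-continuous) families
  have hAeq' : ∀ t, 0 ≤ t → A' t = N' t +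
      ∫ u in (0 : ℝ)..t, ∫ s in (0 : ℝ)..(t - u),
        (N' (t - u - s)).comp ((B' u).comp (A' s)) := by
    intro t ht
    rw [hA'eq t ht, hN'eq t ht, hAeq t ht]
    congr 1
    refine intervalIntegral.integral_congr fun u hu => ?_
    rw [Set.uIcc_of_le ht] at hu
    have hu0 : 0 ≤ u := hu.1
    have hut : u ≤ t := hu.2
    refine intervalIntegral.integral_congr fun s hs => ?_
    rw [Set.uIcc_of_le (by linarith)] at hs
    have hs0 : 0 ≤ s := hs.1
    have hst : s ≤ t - u := hs.2
    rw [hN'eq _ (by linarith), hB'eq _ hu0, hA'eq _ hs0]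
  -- main argument
  intro t₀ ht₀
  set T := t₀
  -- uniform bound on the norms of `N'` and `B'` on `[0, T]`
  obtain ⟨C₁, hC₁⟩ := (isCompact_Icc (a := (0:ℝ)) (b := T)).exists_bound_of_continuousOn
    hN'c.continuousOn
  obtain ⟨C₂, hC₂⟩ := (isCompact_Icc (a := (0:ℝ)) (b := T)).exists_bound_of_continuousOn
    hB'c.continuousOn
  set C : ℝ := max (max C₁ C₂) 0 with hCdef
  have hC0 : 0 ≤ C := le_max_right _ _
  have hCN : ∀ r ∈ Set.Icc (0:ℝ) T, ‖N' r‖ ≤ C :=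
    fun r hr => le_trans (hC₁ r hr) (le_trans (le_max_left _ _) (le_max_left _ _))
  have hCB : ∀ r ∈ Set.Icc (0:ℝ) T, ‖B' r‖ ≤ C :=
    fun r hr => le_trans (hC₂ r hr) (le_trans (le_max_right _ _) (le_max_left _ _))
  set φ : ℝ → ℝ := fun r => infDist (A' r) (S d) with hφdef
  have hφc : Continuous φ := (continuous_infDist_pt (S d)).comp hA'c
  have hφ0 : ∀ r, 0 ≤ φ r := fun r => infDist_nonneg
  set K : ℝ := C * C * T with hKdef
  have hK0 : 0 ≤ K := mul_nonneg (mul_nonneg hC0 hC0) ht₀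
  -- the key integral inequality
  have hkey : ∀ t ∈ Set.Icc (0:ℝ) T, φ t ≤ K * ∫ s in (0:ℝ)..t, φ s := by
    intro t ht
    obtain ⟨ht0, htT⟩ := ht
    -- the (continuous) inner integral
    set F : ℝ → ℝ → L d := fun u s => (N' (t - u - s)).comp ((B' u).comp (A' s)) with hFdef
    have hFc : Continuous (Function.uncurry F) := by
      apply Continuous.clm_comp
      · exact hN'c.comp (by fun_prop)
      · exact Continuous.clm_comp (hB'c.comp continuous_fst) (hA'c.comp continuous_snd)
    set g : ℝ → L d := fun u => ∫ s in (0:ℝ)..(t - u), F u s with hgdef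
    have hgc : Continuous g := by
      exact intervalIntegral.continuous_parametric_intervalIntegral_of_continuous
        (μ := MeasureTheory.volume) hFc (continuous_const.sub continuous_id)
    have step1 : φ t ≤ infDist (∫ u in (0:ℝ)..t, g u) (S d) := by
      rw [hφdef]
      simp only []
      rw [hAeq' t ht0]
      exact infDist_add_le (hN'cp t) _
    have step2 : infDist (∫ u in (0:ℝ)..t, g u) (S d) ≤ ∫ u in (0:ℝ)..t, infDist (g u) (S d) :=
      infDist_integral_le ht0 g hgc
    have hDnn : 0 ≤ ∫ s in (0:ℝ)..t, C * C * φ s :=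
      intervalIntegral.integral_nonneg ht0 fun s _ =>
        mul_nonneg (mul_nonneg hC0 hC0) (hφ0 s)
    have step3 : ∀ u ∈ Set.Icc (0:ℝ) t, infDist (g u) (S d) ≤ ∫ s in (0:ℝ)..t, C * C * φ s := by
      intro u hu
      have hu0 := hu.1
      have hut := hu.2
      have htu : (0:ℝ) ≤ t - u := by linarith
      have j1 : infDist (g u) (S d) ≤ ∫ s in (0:ℝ)..(t - u), infDist (F u s) (S d) :=
        infDist_integral_le htu (F u) (hFc.comp (Continuous.prodMk_right u))
      have j2 : ∫ s in (0:ℝ)..(t - u), infDist (F u s) (S d) ≤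
          ∫ s in (0:ℝ)..(t - u), C * C * φ s := by
        refine intervalIntegral.integral_mono_on htu ?_ ?_ ?_
        · exact (((continuous_infDist_pt (S d)).comp
            (hFc.comp (Continuous.prodMk_right u))).intervalIntegrable _ _)
        · exact ((continuous_const.mul hφc).intervalIntegrable _ _)
        · intro s hs
          have hs0 := hs.1
          have hstu := hs.2
          have h1 : infDist (F u s) (S d) ≤ ‖N' (t - u - s)‖ * ‖B' u‖ * φ s :=
            infDist_comp_le (hN'cp _) (hB'cp _) _
          refine h1.trans ?_
          have hNle : ‖N' (t - u - s)‖ ≤ C := hCN _ ⟨by linarith, by linarith⟩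
          have hBle : ‖B' u‖ ≤ C := hCB _ ⟨hu0, by linarith⟩
          have := mul_le_mul (mul_le_mul hNle hBle (norm_nonneg _) hC0)
            (le_refl (φ s)) (hφ0 s) (mul_nonneg hC0 hC0)
          exact this
      have j3 : ∫ s in (0:ℝ)..(t - u), C * C * φ s ≤ ∫ s in (0:ℝ)..t, C * C * φ s := by
        refine intervalIntegral.integral_mono_interval (le_refl (0:ℝ)) htu (by linarith) ?_ ?_
        · exact Filter.Eventually.of_forall fun s =>
            mul_nonneg (mul_nonneg hC0 hC0) (hφ0 s)
        · exact ((continuous_const.mul hφc).intervalIntegrable _ _)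
      linarith
    have step4 : ∫ u in (0:ℝ)..t, infDist (g u) (S d) ≤
        C * C * (t * ∫ x in (0:ℝ)..t, φ x) := by
      have := intervalIntegral.integral_mono_on ht0
        (((continuous_infDist_pt (S d)).comp hgc).intervalIntegrable _ _)
        (intervalIntegrable_const (μ := MeasureTheory.volume)) step3
      simpa [intervalIntegral.integral_const, smul_eq_mul] using this
    have hint : 0 ≤ ∫ x in (0:ℝ)..t, φ x :=
      intervalIntegral.integral_nonneg ht0 fun s _ => hφ0 s
    calc φ t ≤ ∫ u in (0:ℝ)..t, infDist (g u) (S d) := step1.trans step2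
    _ ≤ C * C * (t * ∫ x in (0:ℝ)..t, φ x) := step4
    _ ≤ C * C * (T * ∫ x in (0:ℝ)..t, φ x) :=
        mul_le_mul_of_nonneg_left (mul_le_mul_of_nonneg_right htT hint) (mul_nonneg hC0 hC0)
    _ = K * ∫ s in (0:ℝ)..t, φ s := by rw [hKdef]; ring
  -- Grönwall
  set ψ : ℝ → ℝ := fun r => ∫ s in (0:ℝ)..r, φ s with hψdef
  have hψd : ∀ r : ℝ, HasDerivAt ψ (φ r) r := by
    intro r
    exact intervalIntegral.integral_hasDerivAt_right
      (hφc.intervalIntegrable _ _)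
      hφc.aestronglyMeasurable.stronglyMeasurableAtFilter
      hφc.continuousAt
  have hψc : Continuous ψ := by
    refine continuous_iff_continuousAt.mpr fun r => (hψd r).continuousAt
  have hψnn : ∀ r ∈ Set.Icc (0:ℝ) T, 0 ≤ ψ r := fun r hr =>
    intervalIntegral.integral_nonneg hr.1 fun s _ => hφ0 s
  have hgron : ∀ x ∈ Set.Icc (0:ℝ) T, ‖ψ x‖ ≤ gronwallBound 0 K 0 (x - 0) := by
    refine norm_le_gronwallBound_of_norm_deriv_right_le (f := ψ) (f' := φ)
      hψc.continuousOn (fun x _ => (hψd x).hasDerivWithinAt) (by simp [hψdef]) ?_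
    intro x hx
    have hx' : x ∈ Set.Icc (0:ℝ) T := ⟨hx.1, hx.2.le⟩
    rw [Real.norm_of_nonneg (hφ0 x)]
    calc φ x ≤ K * ψ x := hkey x hx'
    _ ≤ K * ‖ψ x‖ := mul_le_mul_of_nonneg_left (le_abs_self _) hK0
    _ ≤ K * ‖ψ x‖ + 0 := by linarith
  have hψT : ψ t₀ = 0 := by
    have h1 := hgron t₀ ⟨ht₀, le_refl _⟩
    rw [gronwallBound_ε0_δ0] at h1
    have h3 : |ψ t₀| ≤ 0 := (Real.norm_eq_abs (ψ t₀)) ▸ h1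
    have h4 := le_abs_self (ψ t₀)
    have h5 := neg_abs_le (ψ t₀)
    linarith
  have hφT : φ t₀ = 0 := by
    have h := hkey t₀ ⟨ht₀, le_refl _⟩
    rw [show (∫ s in (0:ℝ)..t₀, φ s) = ψ t₀ from rfl, hψT, mul_zero] at h
    linarith [hφ0 t₀]
  have hmem : A' t₀ ∈ S d :=
    (isClosed_S.mem_iff_infDist_zero S_nonempty).mpr hφT
  rw [← hA'eq t₀ ht₀]
  exact hmem
end

section
/- Let κ > 0 and 0 ≤ γ < 1, and define f : [0,∞) → ℝ by f(t) = e^{−κγt}[ cos(κt√(1−γ²)) + (γ/√(1−γ²)) sin(κt√(1−γ²)) ]. Then f(0) = 1 and f satisfies the integro-differential equation f′(t) = − ∫₀ᵗ κ² e^{−2κγ(t−s)} f(s) ds for all t ≥ 0. -/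
/-- For `κ > 0`, `0 ≤ γ < 1`, the function
`f(t) = e^{−κγt}[cos(κt√(1−γ²)) + (γ/√(1−γ²)) sin(κt√(1−γ²))]` satisfies `f(0) = 1` and
`f′(t) = −∫₀ᵗ κ² e^{−2κγ(t−s)} f(s) ds` for all `t ≥ 0`. -/
theorem lidarShabani_solution_underdamped
    (κ γ : ℝ) (hκ : 0 < κ) (hγ0 : 0 ≤ γ) (hγ1 : γ < 1)
    (f : ℝ → ℝ)
    (hf : ∀ t, f t = Real.exp (-(κ * γ * t)) *
      (Real.cos (κ * t * Real.sqrt (1 - γ ^ 2)) +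
        (γ / Real.sqrt (1 - γ ^ 2)) * Real.sin (κ * t * Real.sqrt (1 - γ ^ 2)))) :
    f 0 = 1 ∧ ∀ t, 0 ≤ t →
      HasDerivAt f (-∫ s in (0 : ℝ)..t, κ ^ 2 * Real.exp (-(2 * κ * γ * (t - s))) * f s) t := by
  set σ := Real.sqrt (1 - γ ^ 2) with hσdef
  have hσ : 0 < σ := Real.sqrt_pos.mpr (by nlinarith)
  have hσ2 : σ ^ 2 = 1 - γ ^ 2 := Real.sq_sqrt (by nlinarith)
  have hσne : σ ≠ 0 := ne_of_gt hσ
  have hκne : κ ≠ 0 := ne_of_gt hκ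
  -- derivative of f everywhere
  have hderiv : ∀ x : ℝ, HasDerivAt f (-(κ / σ) * Real.exp (-(κ * γ * x)) *
      Real.sin (κ * x * σ)) x := by
    intro x
    have hfe : f = fun t => Real.exp (-(κ * γ * t)) *
        (Real.cos (κ * t * σ) + (γ / σ) * Real.sin (κ * t * σ)) := funext hf
    rw [hfe]
    have h1 : HasDerivAt (fun t : ℝ => -(κ * γ * t)) (-(κ * γ)) x := by
      simpa [neg_mul] using (hasDerivAt_id x).const_mul (-(κ * γ))
    have h2 := h1.exp
    have h3 : HasDerivAt (fun t : ℝ => κ * t * σ) (κ * σ) x := by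
      simpa using ((hasDerivAt_id x).const_mul κ).mul_const σ
    have h4 := h3.cos
    have h5 := (h3.sin).const_mul (γ / σ)
    have h8 := h2.mul (h4.add h5)
    convert h8 using 1
    all_goals try rfl
    simp only [Pi.add_apply]
    field_simp
    linear_combination Real.sin (κ * σ * x) * hσ2
  refine ⟨by rw [hf]; simp, fun t ht => ?_⟩
  -- antiderivative for the integral
  have hg : ∀ x : ℝ, HasDerivAt (fun s => Real.exp (κ * γ * s) * (1 / (κ * σ)) *
      Real.sin (κ * s * σ)) (Real.exp (2 * κ * γ * x) * f x) x := by
    intro x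
    have h1 : HasDerivAt (fun s : ℝ => κ * γ * s) (κ * γ) x := by
      simpa using (hasDerivAt_id x).const_mul (κ * γ)
    have h2 := (h1.exp).mul_const (1 / (κ * σ))
    have h3 : HasDerivAt (fun s : ℝ => κ * s * σ) (κ * σ) x := by
      simpa using ((hasDerivAt_id x).const_mul κ).mul_const σ
    have h5 := h2.mul h3.sin
    convert h5 using 1
    all_goals try rfl
    rw [hf x]
    rw [show (2:ℝ) * κ * γ * x = κ * γ * x + κ * γ * x by ring, Real.exp_add,
      show -(κ * γ * x) = -(κ * γ * x) from rfl]
    rw [Real.exp_neg]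
    have he : Real.exp (κ * γ * x) ≠ 0 := Real.exp_ne_zero _
    field_simp
    ring
  have hint : (∫ s in (0 : ℝ)..t, κ ^ 2 * Real.exp (-(2 * κ * γ * (t - s))) * f s)
      = (κ / σ) * Real.exp (-(κ * γ * t)) * Real.sin (κ * t * σ) := by
    have hrw : ∀ s : ℝ, κ ^ 2 * Real.exp (-(2 * κ * γ * (t - s))) * f s
        = (κ ^ 2 * Real.exp (-(2 * κ * γ * t))) * (Real.exp (2 * κ * γ * s) * f s) := by
      intro s
      rw [show -(2 * κ * γ * (t - s)) = -(2 * κ * γ * t) + 2 * κ * γ * s by ring,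
        Real.exp_add]
      ring
    have hcont : Continuous fun s => Real.exp (2 * κ * γ * s) * f s := by
      have hfc : Continuous f := by
        rw [funext hf]; fun_prop
      fun_prop
    have hFTC : (∫ s in (0 : ℝ)..t, Real.exp (2 * κ * γ * s) * f s)
        = Real.exp (κ * γ * t) * (1 / (κ * σ)) * Real.sin (κ * t * σ)
          - Real.exp (κ * γ * 0) * (1 / (κ * σ)) * Real.sin (κ * 0 * σ) := by
      exact intervalIntegral.integral_eq_sub_of_hasDerivAt (fun x _ => hg x)
        (hcont.intervalIntegrable 0 t)
    calc (∫ s in (0 : ℝ)..t, κ ^ 2 * Real.exp (-(2 * κ * γ * (t - s))) * f s)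
        = ∫ s in (0 : ℝ)..t, (κ ^ 2 * Real.exp (-(2 * κ * γ * t)))
            * (Real.exp (2 * κ * γ * s) * f s) := by
          exact intervalIntegral.integral_congr (fun s _ => hrw s)
      _ = (κ ^ 2 * Real.exp (-(2 * κ * γ * t)))
            * ∫ s in (0 : ℝ)..t, Real.exp (2 * κ * γ * s) * f s :=
          intervalIntegral.integral_const_mul _ _
      _ = (κ / σ) * Real.exp (-(κ * γ * t)) * Real.sin (κ * t * σ) := by
          rw [hFTC]
          simp only [mul_zero, Real.sin_zero, zero_mul]
          rw [show -(2 * κ * γ * t) = -(κ * γ * t) + -(κ * γ * t) by ring, Real.exp_add,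
            show -(κ * γ * t) = -(κ * γ * t) from rfl]
          rw [Real.exp_neg (κ * γ * t)]
          have he : Real.exp (κ * γ * t) ≠ 0 := Real.exp_ne_zero _
          field_simp
          ring
  rw [hint]
  simpa [neg_mul] using hderiv t
end

section
/- Let κ > 0 and define f : [0,∞) → ℝ by f(t) = e^{−κt}(1 + κt). Then f(0) = 1 and f satisfies the integro-differential equation f′(t) = − ∫₀ᵗ κ² e^{−2κ(t−s)} f(s) ds for all t ≥ 0. -/
/-- For `κ > 0`, the function `f(t) = e^{−κt}(1 + κt)` satisfies `f(0) = 1` and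
`f′(t) = −∫₀ᵗ κ² e^{−2κ(t−s)} f(s) ds` for all `t ≥ 0` (the Lidar–Shabani case `γ = 1`). -/
theorem lidarShabani_solution_critical
    (κ : ℝ) (hκ : 0 < κ) (f : ℝ → ℝ)
    (hf : ∀ t, f t = Real.exp (-(κ * t)) * (1 + κ * t)) :
    f 0 = 1 ∧ ∀ t, 0 ≤ t →
      HasDerivAt f (-∫ s in (0 : ℝ)..t, κ ^ 2 * Real.exp (-(2 * κ * (t - s))) * f s) t := by
  constructor
  · simp [hf 0]
  · intro t ht
    -- evaluate the integral
    have hF : ∀ s : ℝ, HasDerivAt (fun s => κ ^ 2 * Real.exp (-(2 * κ * t)) * (s * Real.exp (κ * s)))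
        (κ ^ 2 * Real.exp (-(2 * κ * (t - s))) * f s) s := by
      intro s
      have h1 : HasDerivAt (fun s : ℝ => κ * s) κ s := by
        simpa using (hasDerivAt_id s).const_mul κ
      have h2 : HasDerivAt (fun s : ℝ => Real.exp (κ * s)) (Real.exp (κ * s) * κ) s :=
        h1.exp
      have h3 : HasDerivAt (fun s : ℝ => s * Real.exp (κ * s))
          (1 * Real.exp (κ * s) + s * (Real.exp (κ * s) * κ)) s :=
        (hasDerivAt_id s).mul h2
      have h4 := h3.const_mul (κ ^ 2 * Real.exp (-(2 * κ * t)))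
      refine h4.congr_deriv ?_
      symm
      rw [hf s]
      rw [show -(2 * κ * (t - s)) = -(2 * κ * t) + (κ * s + κ * s) by ring,
        show -(κ * s) = -(κ*s) from rfl]
      rw [Real.exp_add, Real.exp_add]
      rw [show (-(κ * s)) = -(κ * s) from rfl]
      have : Real.exp (κ * s) * Real.exp (-(κ * s)) = 1 := by
        rw [← Real.exp_add]; simp
      linear_combination κ ^ 2 * Real.exp (-(2 * κ * t)) * Real.exp (κ * s) * (1 + κ * s) * this
    have hint : (∫ s in (0 : ℝ)..t, κ ^ 2 * Real.exp (-(2 * κ * (t - s))) * f s)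
        = κ ^ 2 * t * Real.exp (-(κ * t)) := by
      rw [intervalIntegral.integral_eq_sub_of_hasDerivAt (fun s _ => hF s)]
      · have : Real.exp (-(2 * κ * t)) * Real.exp (κ * t) = Real.exp (-(κ * t)) := by
          rw [← Real.exp_add]; ring_nf
        simp only [zero_mul, mul_zero, sub_zero]
        linear_combination κ ^ 2 * t * this
      · apply Continuous.intervalIntegrable
        continuity
    rw [hint]
    -- derivative of f
    have h1 : HasDerivAt (fun s : ℝ => -(κ * s)) (-κ) t := by
      simpa using ((hasDerivAt_id t).const_mul κ).fun_neg
    have h2 : HasDerivAt (fun s : ℝ => Real.exp (-(κ * s))) (Real.exp (-(κ * t)) * (-κ)) t :=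
      h1.exp
    have h3 : HasDerivAt (fun s : ℝ => 1 + κ * s) κ t := by
      simpa using ((hasDerivAt_id t).const_mul κ).const_add 1
    have h4 := h2.mul h3
    have heq : f = fun s => Real.exp (-(κ * s)) * (1 + κ * s) := funext hf
    rw [heq]
    refine h4.congr_deriv ?_
    ring
end

section
/- Let κ > 0 and γ > 1, and define f : [0,∞) → ℝ by f(t) = e^{−κγt}[ cosh(κt√(γ²−1)) + (γ/√(γ²−1)) sinh(κt√(γ²−1)) ]. Then f(0) = 1 and f satisfies the integro-differential equation f′(t) = − ∫₀ᵗ κ² e^{−2κγ(t−s)} f(s) ds for all t ≥ 0. -/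
lemma int_exp_aux (c t : ℝ) (hc : c ≠ 0) :
    ∫ x in (0:ℝ)..t, Real.exp (c * x) = (Real.exp (c * t) - 1) / c := by
  have h : ∀ x ∈ Set.uIcc (0:ℝ) t,
      HasDerivAt (fun y => Real.exp (c * y) / c) (Real.exp (c * x)) x := by
    intro x _
    have h1 : HasDerivAt (fun y => Real.exp (c * y)) (Real.exp (c * x) * c) x := by
      simpa [Function.comp_def] using (Real.hasDerivAt_exp (c * x)).comp x ((hasDerivAt_id x).const_mul c)
    have := h1.div_const c
    simpa [mul_div_assoc, mul_div_cancel_right₀ _ hc] using this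
  have hint : IntervalIntegrable (fun x => Real.exp (c * x)) MeasureTheory.volume 0 t :=
    (Real.continuous_exp.comp (continuous_const.mul continuous_id)).intervalIntegrable _ _
  rw [intervalIntegral.integral_eq_sub_of_hasDerivAt h hint]
  simp [Real.exp_zero]
  ring

/-- For `κ > 0`, `γ > 1`, the function
`f(t) = e^{−κγt}[cosh(κt√(γ²−1)) + (γ/√(γ²−1)) sinh(κt√(γ²−1))]` satisfies `f(0) = 1` and
`f′(t) = −∫₀ᵗ κ² e^{−2κγ(t−s)} f(s) ds` for all `t ≥ 0`. -/
theorem lidarShabani_solution_overdamped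
    (κ γ : ℝ) (hκ : 0 < κ) (hγ : 1 < γ)
    (f : ℝ → ℝ)
    (hf : ∀ t, f t = Real.exp (-(κ * γ * t)) *
      (Real.cosh (κ * t * Real.sqrt (γ ^ 2 - 1)) +
        (γ / Real.sqrt (γ ^ 2 - 1)) * Real.sinh (κ * t * Real.sqrt (γ ^ 2 - 1)))) :
    f 0 = 1 ∧ ∀ t, 0 ≤ t →
      HasDerivAt f (-∫ s in (0 : ℝ)..t, κ ^ 2 * Real.exp (-(2 * κ * γ * (t - s))) * f s) t := by
  have hγ2 : (0:ℝ) < γ ^ 2 - 1 := by nlinarith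
  set s0 := Real.sqrt (γ ^ 2 - 1) with hs0def
  have hs : 0 < s0 := Real.sqrt_pos.2 hγ2
  have hs2 : s0 ^ 2 = γ ^ 2 - 1 := Real.sq_sqrt hγ2.le
  have hsγ : s0 < γ := by nlinarith
  set ω := κ * s0 with hωdef
  have hωpos : 0 < ω := mul_pos hκ hs
  have hωγ : ω < κ * γ := by nlinarith
  set A := (1 + γ / s0) / 2 with hAdef
  set B := (1 - γ / s0) / 2 with hBdef
  have hfe : ∀ t, f t = A * Real.exp ((ω - κ * γ) * t) + B * Real.exp (-((ω + κ * γ) * t)) := by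
    intro t
    rw [hf t, Real.cosh_eq, Real.sinh_eq]
    have h1 : (ω - κ * γ) * t = κ * t * s0 + -(κ * γ * t) := by rw [hωdef]; ring
    have h2 : -((ω + κ * γ) * t) = -(κ * t * s0) + -(κ * γ * t) := by rw [hωdef]; ring
    rw [h1, h2, Real.exp_add, Real.exp_add, hAdef, hBdef]
    ring
  refine ⟨by rw [hf 0]; simp, ?_⟩
  intro t ht
  have hd1 : (0:ℝ) < ω + κ * γ := by linarith
  have hd2 : (0:ℝ) < κ * γ - ω := by linarith
  have hprod : (ω + κ * γ) * (κ * γ - ω) = κ ^ 2 := by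
    rw [hωdef]; nlinarith [hs2]
  have hkey : A * (κ * γ - ω) + B * (κ * γ + ω) = 0 := by
    rw [hAdef, hBdef, hωdef]
    field_simp
    ring
  -- pointwise rewriting of the integrand
  have hpt : ∀ x, κ ^ 2 * Real.exp (-(2 * κ * γ * (t - x))) * f x
      = Real.exp (-(2 * κ * γ * t)) *
        (κ ^ 2 * A * Real.exp ((ω + κ * γ) * x) + κ ^ 2 * B * Real.exp ((κ * γ - ω) * x)) := by
    intro x
    rw [hfe x]
    have e1 : Real.exp (-(2 * κ * γ * (t - x))) * Real.exp ((ω - κ * γ) * x)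
        = Real.exp (-(2 * κ * γ * t)) * Real.exp ((ω + κ * γ) * x) := by
      rw [← Real.exp_add, ← Real.exp_add]; ring_nf
    have e2 : Real.exp (-(2 * κ * γ * (t - x))) * Real.exp (-((ω + κ * γ) * x))
        = Real.exp (-(2 * κ * γ * t)) * Real.exp ((κ * γ - ω) * x) := by
      rw [← Real.exp_add, ← Real.exp_add]; ring_nf
    linear_combination κ ^ 2 * A * e1 + κ ^ 2 * B * e2
  have hIi : ∀ c : ℝ, IntervalIntegrable (fun x => Real.exp (c * x)) MeasureTheory.volume 0 t :=
    fun c => (Real.continuous_exp.comp (continuous_const.mul continuous_id)).intervalIntegrable _ _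
  have hIntEq : (∫ x in (0:ℝ)..t, κ ^ 2 * Real.exp (-(2 * κ * γ * (t - x))) * f x)
      = Real.exp (-(2 * κ * γ * t)) *
        (κ ^ 2 * A * ((Real.exp ((ω + κ * γ) * t) - 1) / (ω + κ * γ))
          + κ ^ 2 * B * ((Real.exp ((κ * γ - ω) * t) - 1) / (κ * γ - ω))) := by
    rw [intervalIntegral.integral_congr (g := fun x => Real.exp (-(2 * κ * γ * t)) *
        (κ ^ 2 * A * Real.exp ((ω + κ * γ) * x) + κ ^ 2 * B * Real.exp ((κ * γ - ω) * x)))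
        (fun x _ => hpt x)]
    rw [intervalIntegral.integral_const_mul]
    rw [intervalIntegral.integral_add ((hIi _).const_mul _) ((hIi _).const_mul _)]
    rw [intervalIntegral.integral_const_mul, intervalIntegral.integral_const_mul]
    rw [int_exp_aux _ _ hd1.ne', int_exp_aux _ _ hd2.ne']
  -- derivative of f
  have h1 : HasDerivAt (fun y : ℝ => (ω - κ * γ) * y) (ω - κ * γ) t := by
    simpa using (hasDerivAt_id t).const_mul (ω - κ * γ)
  have h2 : HasDerivAt (fun y : ℝ => -((ω + κ * γ) * y)) (-(ω + κ * γ)) t := by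
    have h2' : HasDerivAt (fun y : ℝ => (ω + κ * γ) * y) (ω + κ * γ) t := by
      simpa using (hasDerivAt_id t).const_mul (ω + κ * γ)
    exact h2'.neg
  have hdf : HasDerivAt f
      (A * (Real.exp ((ω - κ * γ) * t) * (ω - κ * γ))
        + B * (Real.exp (-((ω + κ * γ) * t)) * (-(ω + κ * γ)))) t := by
    have hfun : f = fun y => A * Real.exp ((ω - κ * γ) * y) + B * Real.exp (-((ω + κ * γ) * y)) :=
      funext hfe
    rw [hfun]
    exact (h1.exp.const_mul A).add (h2.exp.const_mul B)
  -- exponential relations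
  have hE1 : Real.exp (-(2 * κ * γ * t)) * Real.exp ((ω + κ * γ) * t)
      = Real.exp ((ω - κ * γ) * t) := by rw [← Real.exp_add]; ring_nf
  have hE2 : Real.exp (-(2 * κ * γ * t)) * Real.exp ((κ * γ - ω) * t)
      = Real.exp (-((ω + κ * γ) * t)) := by rw [← Real.exp_add]; ring_nf
  convert hdf using 1
  rw [hIntEq]
  set P := Real.exp ((ω + κ * γ) * t) with hP
  set Q := Real.exp ((κ * γ - ω) * t) with hQ
  set X := Real.exp ((ω - κ * γ) * t) with hX
  set Y := Real.exp (-((ω + κ * γ) * t)) with hY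
  set E := Real.exp (-(2 * κ * γ * t)) with hE
  clear_value P Q X Y E
  clear_value A B
  have hq1 : κ ^ 2 * A * ((P - 1) / (ω + κ * γ)) = A * (κ ^ 2 / (ω + κ * γ)) * (P - 1) := by
    ring
  have hq2 : κ ^ 2 * B * ((Q - 1) / (κ * γ - ω)) = B * (κ ^ 2 / (κ * γ - ω)) * (Q - 1) := by
    ring
  have hr1 : κ ^ 2 / (ω + κ * γ) = κ * γ - ω := by
    field_simp
    linear_combination κ ^ 2 * hs2
  have hr2 : κ ^ 2 / (κ * γ - ω) = ω + κ * γ := by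
    field_simp
    linear_combination κ ^ 2 * hs2
  rw [hq1, hq2, hr1, hr2]
  linear_combination (-(A * (κ * γ - ω))) * hE1 + (-(B * (ω + κ * γ))) * hE2 + E * hkey
end

section
/- Let κ > 0 and γ ≥ 1, and let f : [0,∞) → ℝ be the solution of f′(t) = − ∫₀ᵗ κ² e^{−2κγ(t−s)} f(s) ds with f(0) = 1 (explicitly, f(t) = e^{−κt}(1+κt) if γ = 1 and f(t) = e^{−κγt}[ cosh(κt√(γ²−1)) + (γ/√(γ²−1)) sinh(κt√(γ²−1)) ] if γ > 1). Then f(t) ≥ 0 for all t ≥ 0. -/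
/-- For `κ > 0` and `γ ≥ 1`, the solution of
`f′(t) = −∫₀ᵗ κ² e^{−2κγ(t−s)} f(s) ds` with `f(0) = 1` is nonnegative for all `t ≥ 0`. -/
theorem lidarShabani_nonneg_of_one_le_gamma
    (κ γ : ℝ) (hκ : 0 < κ) (hγ : 1 ≤ γ)
    (f : ℝ → ℝ) (hf0 : f 0 = 1)
    (hf : ∀ t, 0 ≤ t →
      HasDerivAt f (-∫ s in (0 : ℝ)..t, κ ^ 2 * Real.exp (-(2 * κ * γ * (t - s))) * f s) t) :
    ∀ t, 0 ≤ t → 0 ≤ f t := by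
  -- the roots of the characteristic polynomial `X^2 + 2κγ X + κ² = 0`
  set δ : ℝ := Real.sqrt (γ ^ 2 - 1) with hδdef
  have hδ0 : 0 ≤ δ := Real.sqrt_nonneg _
  have hδ2 : δ ^ 2 = γ ^ 2 - 1 := Real.sq_sqrt (by nlinarith)
  have hδγ : δ ≤ γ := by
    have : δ ≤ Real.sqrt (γ ^ 2) := Real.sqrt_le_sqrt (by nlinarith)
    rwa [show γ ^ 2 = γ * γ by ring, Real.sqrt_mul_self (by linarith)] at this
  set r₁ : ℝ := -(κ * γ) - κ * δ with hr1def
  set r₂ : ℝ := -(κ * γ) + κ * δ with hr2def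
  have hr2 : r₂ ≤ 0 := by rw [hr2def]; nlinarith
  have hsum : r₁ + r₂ = -(2 * κ * γ) := by rw [hr1def, hr2def]; ring
  have hprod : r₁ * r₂ = κ ^ 2 := by rw [hr1def, hr2def]; nlinarith [hδ2]
  -- continuous extension of `f` to the whole line
  set F : ℝ → ℝ := fun s => f (max s 0) with hFdef
  have hFf : ∀ s, 0 ≤ s → F s = f s := fun s hs => by simp [hFdef, max_eq_left hs]
  have hfc : ∀ t, 0 ≤ t → ContinuousAt f t := fun t ht => (hf t ht).continuousAt
  have hmax : Continuous (fun s : ℝ => max s 0) := continuous_id.max continuous_const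
  have hFc : Continuous F := by
    rw [continuous_iff_continuousAt]
    intro s
    have h1 : ContinuousAt f ((fun s : ℝ => max s 0) s) := hfc _ (le_max_right s 0)
    exact ContinuousAt.comp (g := f) (f := fun s : ℝ => s ⊔ 0) h1 hmax.continuousAt
  -- the primitive of `e^{2κγ s} F s`
  set P : ℝ → ℝ := fun t => ∫ s in (0:ℝ)..t, Real.exp (2 * κ * γ * s) * F s with hPdef
  have hPc : Continuous (fun s => Real.exp (2 * κ * γ * s) * F s) :=
    (Real.continuous_exp.comp (continuous_const.mul continuous_id)).mul hFc
  have hP : ∀ t, HasDerivAt P (Real.exp (2 * κ * γ * t) * F t) t := fun t =>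
    (hPc.integral_hasStrictDerivAt 0 t).hasDerivAt
  -- the expression for `f'`
  set φ : ℝ → ℝ := fun t => -(κ ^ 2 * (Real.exp (-(2 * κ * γ) * t) * P t)) with hφdef
  have hint : ∀ t, 0 ≤ t →
      (∫ s in (0:ℝ)..t, κ ^ 2 * Real.exp (-(2 * κ * γ * (t - s))) * f s)
        = κ ^ 2 * (Real.exp (-(2 * κ * γ) * t) * P t) := by
    intro t ht
    rw [hPdef]
    rw [← intervalIntegral.integral_const_mul, ← intervalIntegral.integral_const_mul]
    apply intervalIntegral.integral_congr
    intro s hs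
    rw [Set.uIcc_of_le ht] at hs
    show κ ^ 2 * Real.exp (-(2 * κ * γ * (t - s))) * f s
        = κ ^ 2 * (Real.exp (-(2 * κ * γ) * t) * (Real.exp (2 * κ * γ * s) * F s))
    rw [hFf s hs.1]
    rw [show -(2 * κ * γ * (t - s)) = -(2 * κ * γ) * t + 2 * κ * γ * s by ring, Real.exp_add]
    ring
  have hfφ : ∀ t, 0 ≤ t → HasDerivAt f (φ t) t := by
    intro t ht
    have h := hf t ht
    rw [hint t ht] at h
    rw [hφdef]
    exact h
  have hFφ : ∀ t, 0 < t → HasDerivAt F (φ t) t := by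
    intro t ht
    apply (hfφ t ht.le).congr_of_eventuallyEq
    filter_upwards [eventually_gt_nhds ht] with s hs
    exact hFf s hs.le
  -- derivative of φ on (0, ∞): φ' = -(2κγ) φ - κ² F
  have hE : ∀ (c : ℝ) (t : ℝ), HasDerivAt (fun u => Real.exp (c * u)) (c * Real.exp (c * t)) t := by
    intro c t
    have := ((hasDerivAt_id t).const_mul c).exp
    simpa [mul_comm] using this
  have hφ' : ∀ t, 0 < t →
      HasDerivAt φ (-(2 * κ * γ) * φ t - κ ^ 2 * F t) t := by
    intro t ht
    have h1 : HasDerivAt (fun u => Real.exp (-(2 * κ * γ) * u) * P u)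
        (-(2 * κ * γ) * Real.exp (-(2 * κ * γ) * t) * P t
          + Real.exp (-(2 * κ * γ) * t) * (Real.exp (2 * κ * γ * t) * F t)) t :=
      (hE (-(2 * κ * γ)) t).mul (hP t)
    have h2 := (h1.const_mul (κ ^ 2)).neg
    have hee : Real.exp (-(2 * κ * γ) * t) * Real.exp (2 * κ * γ * t) = 1 := by
      rw [← Real.exp_add]
      norm_num
    rw [hφdef]
    convert h2 using 1
    all_goals try rfl
    linear_combination (κ ^ 2 * F t) * hee
  -- g := φ - r₂ F satisfies g' = r₁ g on (0,∞)
  set g : ℝ → ℝ := fun t => φ t - r₂ * F t with hgdef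
  have hg' : ∀ t, 0 < t → HasDerivAt g (r₁ * g t) t := by
    intro t ht
    have h := (hφ' t ht).sub ((hFφ t ht).const_mul r₂)
    rw [hgdef]
    convert h using 1
    all_goals try rfl
    linear_combination (φ t) * hsum - (F t) * hprod
  have hφcont : Continuous φ := by
    rw [hφdef]
    apply Continuous.neg
    exact continuous_const.mul
      ((Real.continuous_exp.comp (by fun_prop)).mul
        (by rw [continuous_iff_continuousAt]; exact fun t => (hP t).continuousAt))
  have hgcont : Continuous g := by
    rw [hgdef]; exact hφcont.sub (continuous_const.mul hFc)
  -- G := e^{-r₁ t} g t is constant on [0,∞)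
  set G : ℝ → ℝ := fun t => Real.exp (-r₁ * t) * g t with hGdef
  have hG' : ∀ t, 0 < t → HasDerivAt G 0 t := by
    intro t ht
    have h := (hE (-r₁) t).mul (hg' t ht)
    rw [hGdef]
    convert h using 1
    all_goals try rfl
    ring
  have hGcont : Continuous G := by
    rw [hGdef]
    exact (Real.continuous_exp.comp (by fun_prop)).mul hgcont
  have hGmono : MonotoneOn G (Set.Ici (0:ℝ)) := by
    apply monotoneOn_of_hasDerivWithinAt_nonneg (f' := fun _ => 0) (convex_Ici 0)
      hGcont.continuousOn
    · intro x hx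
      rw [interior_Ici] at hx ⊢
      exact (hG' x hx).hasDerivWithinAt
    · intro x _; exact le_refl 0
  have hGanti : AntitoneOn G (Set.Ici (0:ℝ)) := by
    apply antitoneOn_of_hasDerivWithinAt_nonpos (f' := fun _ => 0) (convex_Ici 0)
      hGcont.continuousOn
    · intro x hx
      rw [interior_Ici] at hx ⊢
      exact (hG' x hx).hasDerivWithinAt
    · intro x _; exact le_refl 0
  have hG0 : G 0 = -r₂ := by
    have hP0 : P 0 = 0 := by rw [hPdef]; exact intervalIntegral.integral_same
    simp [hGdef, hgdef, hφdef, hP0, hFf 0 le_rfl, hf0]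
  have hGconst : ∀ t, 0 ≤ t → G t = -r₂ := by
    intro t ht
    have h1 := hGmono (Set.self_mem_Ici) ht ht
    have h2 := hGanti (Set.self_mem_Ici) ht ht
    rw [hG0] at h1 h2
    linarith
  have hgnn : ∀ t, 0 ≤ t → 0 ≤ g t := by
    intro t ht
    have h := hGconst t ht
    simp only [hGdef] at h
    by_contra hneg
    push_neg at hneg
    have h3 := mul_neg_of_pos_of_neg (Real.exp_pos (-r₁ * t)) hneg
    rw [h] at h3
    linarith
  -- H := e^{-r₂ t} F t is monotone on [0,∞), hence `f t ≥ e^{r₂ t} > 0`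
  set H : ℝ → ℝ := fun t => Real.exp (-r₂ * t) * F t with hHdef
  have hH' : ∀ t, 0 < t → HasDerivAt H (Real.exp (-r₂ * t) * g t) t := by
    intro t ht
    have h := (hE (-r₂) t).mul (hFφ t ht)
    rw [hHdef]
    convert h using 1
    all_goals try rfl
    simp only [hgdef]
    ring
  have hHcont : Continuous H := by
    rw [hHdef]
    exact (Real.continuous_exp.comp (by fun_prop)).mul hFc
  have hHmono : MonotoneOn H (Set.Ici (0:ℝ)) := by
    apply monotoneOn_of_hasDerivWithinAt_nonneg
      (f' := fun t => Real.exp (-r₂ * t) * g t) (convex_Ici 0) hHcont.continuousOn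
    · intro x hx
      rw [interior_Ici] at hx ⊢
      exact (hH' x hx).hasDerivWithinAt
    · intro x hx
      rw [interior_Ici] at hx
      exact mul_nonneg (Real.exp_pos _).le (hgnn x hx.le)
  intro t ht
  have h1 : H 0 ≤ H t := hHmono Set.self_mem_Ici ht ht
  have hH0 : H 0 = 1 := by simp [hHdef, hFf 0 le_rfl, hf0]
  rw [hH0] at h1
  simp only [hHdef] at h1
  by_contra hneg
  push_neg at hneg
  have hFt : F t < 0 := by rw [hFf t ht]; exact hneg
  have h3 := mul_neg_of_pos_of_neg (Real.exp_pos (-r₂ * t)) hFt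
  linarith
end

section
/- Let κ > 0 and 0 ≤ γ < 1, and let f : [0,∞) → ℝ be the solution of f′(t) = − ∫₀ᵗ κ² e^{−2κγ(t−s)} f(s) ds with f(0) = 1, given explicitly by f(t) = e^{−κγt}[ cos(κt√(1−γ²)) + (γ/√(1−γ²)) sin(κt√(1−γ²)) ]. Then there exists t > 0 with f(t) < 0. -/
/-- For `κ > 0` and `0 ≤ γ < 1`, the solution
`f(t) = e^{−κγt}[cos(κt√(1−γ²)) + (γ/√(1−γ²)) sin(κt√(1−γ²))]` of the Lidar–Shabani
normalization equation becomes negative at some `t > 0`. -/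
theorem lidarShabani_negative_of_gamma_lt_one
    (κ γ : ℝ) (hκ : 0 < κ) (hγ0 : 0 ≤ γ) (hγ1 : γ < 1)
    (f : ℝ → ℝ)
    (hf : ∀ t, f t = Real.exp (-(κ * γ * t)) *
      (Real.cos (κ * t * Real.sqrt (1 - γ ^ 2)) +
        (γ / Real.sqrt (1 - γ ^ 2)) * Real.sin (κ * t * Real.sqrt (1 - γ ^ 2)))) :
    ∃ t, 0 < t ∧ f t < 0 := by
  set s := Real.sqrt (1 - γ ^ 2) with hs
  have h1 : (0:ℝ) < 1 - γ ^ 2 := by nlinarith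
  have hspos : 0 < s := Real.sqrt_pos.mpr h1
  refine ⟨Real.pi / (κ * s), by positivity, ?_⟩
  have harg : κ * (Real.pi / (κ * s)) * s = Real.pi := by
    field_simp
  rw [hf, harg, Real.cos_pi, Real.sin_pi]
  have : Real.exp (-(κ * γ * (Real.pi / (κ * s)))) > 0 := Real.exp_pos _
  nlinarith [this]
end
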